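/- arXiv:2601.21466 — 5 statements merged into one kernel-verified Lean document; each statement's English description precedes it below -/
import Mathlib

section
/- Let a = (a₁,…,aₙ) ∈ ℍⁿ be a point whose components commute pairwise (a_l a_m = a_m a_l for all 1 ≤ l,m ≤ n), and let P, Q ∈ ℍ[q₁,…,qₙ]. Then (P*Q)(a) = 0 if P(a) = 0, and (P*Q)(a) = P(a) · Q(P(a)⁻¹ a₁ P(a), P(a)⁻¹ a₂ P(a), …, P(a)⁻¹ aₙ P(a)) if P(a) ≠ 0. -/
/-- The quaternions ℍ. -/
abbrev Hq : Type := Quaternion ℝ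

/-- The ring ℍ[q₁,…,qₙ] of slice regular polynomials in `n` quaternionic variables,
realized as the (noncommutative) monoid algebra over the multi-degrees `Fin n →₀ ℕ`:
the slice product satisfies `single m a * single l b = single (m+l) (a*b)`. -/
abbrev SlicePoly (n : ℕ) : Type := AddMonoidAlgebra Hq (Fin n →₀ ℕ)

/-- A right ideal of a (possibly noncommutative) ring. -/
structure RightIdeal (R : Type) [Ring R] where
  carrier : Set R
  zero_mem : (0 : R) ∈ carrier
  add_mem : ∀ {x y : R}, x ∈ carrier → y ∈ carrier → x + y ∈ carrier
  mul_mem_right : ∀ {x : R} (y : R), x ∈ carrier → x * y ∈ carrier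

/-- The right ideal generated by a set. -/
def RightIdeal.span {R : Type} [Ring R] (s : Set R) : RightIdeal R where
  carrier := {x | ∀ I : RightIdeal R, s ⊆ I.carrier → x ∈ I.carrier}
  zero_mem := fun I _ => I.zero_mem
  add_mem := fun hx hy I hs => I.add_mem (hx I hs) (hy I hs)
  mul_mem_right := fun y hx I hs => I.mul_mem_right y (hx I hs)

/-- Evaluation of `P = Σ q₁^{ℓ₁}⋯qₙ^{ℓₙ} a_ℓ` at a point `a ∈ ℍⁿ`:
`P(a) = Σ a₁^{ℓ₁}⋯aₙ^{ℓₙ} a_ℓ` (ordered product of powers, coefficient on the right). -/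
noncomputable def seval {n : ℕ} (P : SlicePoly n) (a : Fin n → Hq) : Hq :=
  ∑ m ∈ P.coeff.support, (List.ofFn fun i => a i ^ m i).prod * P.coeff m

/-- The regular conjugate `P^c`, obtained by conjugating each coefficient. -/
noncomputable def rconj {n : ℕ} (P : SlicePoly n) : SlicePoly n :=
  ∑ m ∈ P.coeff.support, AddMonoidAlgebra.single m (star (P.coeff m))

/-- The symmetrization `P^s = P * P^c`. -/
noncomputable def ssymm {n : ℕ} (P : SlicePoly n) : SlicePoly n := P * rconj P

/-- `V(I)`: the common zero set of the polynomials in `I`. -/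
def Vv {n : ℕ} (I : RightIdeal (SlicePoly n)) : Set (Fin n → Hq) :=
  {a | ∀ P ∈ I.carrier, seval P a = 0}

/-- The union `⋃_{K ∈ 𝕊} ℂ_Kⁿ` of the slices of `ℍⁿ`. -/
def slicePoints (n : ℕ) : Set (Fin n → Hq) :=
  {a | ∃ K : Hq, K ^ 2 = -1 ∧ ∀ i, ∃ x y : ℝ, a i = (x : Hq) + (y : Hq) * K}

/-- `V_c(I) = V(I) ∩ ⋃_{K ∈ 𝕊} ℂ_Kⁿ`. -/
def Vc {n : ℕ} (I : RightIdeal (SlicePoly n)) : Set (Fin n → Hq) :=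
  Vv I ∩ slicePoints n

/-- The spherical set `S_a = {(g⁻¹a₁g,…,g⁻¹aₙg) : g ∈ ℍ∖{0}}`. -/
def sphSet {n : ℕ} (a : Fin n → Hq) : Set (Fin n → Hq) :=
  {b | ∃ g : Hq, g ≠ 0 ∧ b = fun i => g⁻¹ * a i * g}

/-- The symmetrization `S_E = ⋃_{a ∈ E} S_a` of a set `E ⊆ ℍⁿ`. -/
def symmSet {n : ℕ} (E : Set (Fin n → Hq)) : Set (Fin n → Hq) :=
  ⋃ a ∈ E, sphSet a

/-- A right ideal is proper and nontrivial. -/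
def RightIdeal.ProperNontrivial {R : Type} [Ring R] (I : RightIdeal R) : Prop :=
  I.carrier ≠ Set.univ ∧ I.carrier ≠ {0}

/-- A right ideal `I` is quasi prime if `P*Q ∈ I` implies `P ∈ I` or `Q^s ∈ I`. -/
def QuasiPrime {n : ℕ} (I : RightIdeal (SlicePoly n)) : Prop :=
  ∀ P Q : SlicePoly n, P * Q ∈ I.carrier → P ∈ I.carrier ∨ ssymm Q ∈ I.carrier

/-- A right ideal `I` is completely prime if `P*Q ∈ I` and `P*I ⊆ I` imply
`P ∈ I` or `Q ∈ I`. -/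
def CompletelyPrime {n : ℕ} (I : RightIdeal (SlicePoly n)) : Prop :=
  ∀ P Q : SlicePoly n, P * Q ∈ I.carrier → (∀ R ∈ I.carrier, P * R ∈ I.carrier) →
    P ∈ I.carrier ∨ Q ∈ I.carrier

/-- The (right) radical `√I`: the intersection of all completely prime right ideals
containing `I`. -/
def radicalSet {n : ℕ} (I : RightIdeal (SlicePoly n)) : Set (SlicePoly n) :=
  ⋂ J ∈ {J : RightIdeal (SlicePoly n) | CompletelyPrime J ∧ I.carrier ⊆ J.carrier}, J.carrier

/-- `I` is radical if `√I = I`. -/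
def IsRadicalIdeal {n : ℕ} (I : RightIdeal (SlicePoly n)) : Prop :=
  radicalSet I = I.carrier

/-- The symmetrized ideal `S(I)`, the right ideal generated by `{P^s : P ∈ I}`. -/
noncomputable def symmIdeal {n : ℕ} (I : RightIdeal (SlicePoly n)) : RightIdeal (SlicePoly n) :=
  RightIdeal.span {P | ∃ Q ∈ I.carrier, P = ssymm Q}

/-- `V_c(I)` is reducible: it is the union `V_c(I₁) ∪ V_c(I₂)` for two proper nontrivial
right ideals, neither contained in the other. -/
def VcReducible {n : ℕ} (I : RightIdeal (SlicePoly n)) : Prop :=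
  ∃ I₁ I₂ : RightIdeal (SlicePoly n), I₁.ProperNontrivial ∧ I₂.ProperNontrivial ∧
    ¬ I₁.carrier ⊆ I₂.carrier ∧ ¬ I₂.carrier ⊆ I₁.carrier ∧
    Vc I = Vc I₁ ∪ Vc I₂

theorem ofFn_prod_mul {M : Type*} [Monoid M] {k : ℕ} (f g : Fin k → M)
    (h : ∀ i j, Commute (g i) (f j)) :
    (List.ofFn fun i => f i * g i).prod = (List.ofFn f).prod * (List.ofFn g).prod := by
  induction k with
  | zero => simp
  | succ k ih =>
    simp only [List.ofFn_succ, List.prod_cons]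
    rw [ih (fun i => f i.succ) (fun i => g i.succ) (fun i j => h _ _)]
    have hc : Commute (g 0) (List.ofFn fun i => f i.succ).prod :=
      Commute.list_prod_right _ _ (by
        simp only [List.forall_mem_ofFn_iff]
        intro j; exact h 0 j.succ)
    simp only [mul_assoc]
    rw [hc.left_comm]

section aux
variable {n : ℕ} (a : Fin n → Hq)

noncomputable def Amon (m : Fin n →₀ ℕ) : Hq := (List.ofFn fun i => a i ^ m i).prod

theorem seval_eq (R : SlicePoly n) : seval R a = ∑ m ∈ R.coeff.support, Amon a m * R.coeff m := rfl

variable (hcomm : ∀ l m : Fin n, a l * a m = a m * a l)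
include hcomm

theorem Amon_add (m l : Fin n →₀ ℕ) : Amon a (m + l) = Amon a m * Amon a l := by
  simp only [Amon, Finsupp.add_apply, pow_add]
  exact ofFn_prod_mul _ _ fun i j => Commute.pow_pow (hcomm i j) _ _

theorem Amon_comm (m l : Fin n →₀ ℕ) : Amon a m * Amon a l = Amon a l * Amon a m := by
  refine Commute.eq ?_
  refine Commute.list_prod_left _ _ ?_
  simp only [List.forall_mem_ofFn_iff]
  intro i
  refine Commute.list_prod_right _ _ ?_
  simp only [List.forall_mem_ofFn_iff]
  intro j
  exact Commute.pow_pow (hcomm i j) _ _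

end aux

noncomputable def conjHom (p : Hq) (hp : p ≠ 0) : Hq →* Hq where
  toFun x := p⁻¹ * x * p
  map_one' := by simp [inv_mul_cancel₀ hp]
  map_mul' x y := by
    simp only [mul_assoc, mul_inv_cancel_left₀ hp]

theorem seval_mul_key {n : ℕ} (a : Fin n → Hq)
    (hcomm : ∀ l m : Fin n, a l * a m = a m * a l) (P Q : SlicePoly n) :
    seval (P * Q) a = ∑ l ∈ Q.coeff.support, Amon a l * seval P a * Q.coeff l := by
  have h0 : ∀ m : Fin n →₀ ℕ, Amon a m * (0 : Hq) = 0 := fun _ => mul_zero _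
  have h1 : ∀ (m : Fin n →₀ ℕ) (b c : Hq), Amon a m * (b + c) = Amon a m * b + Amon a m * c :=
    fun _ _ _ => mul_add _ _ _
  calc seval (P * Q) a
      = (P * Q).coeff.sum fun m c => Amon a m * c := rfl
    _ = P.coeff.sum fun m b => Q.coeff.sum fun l c => Amon a (m + l) * (b * c) := by
        rw [AddMonoidAlgebra.mul_def, AddMonoidAlgebra.coeff_finsuppSum, Finsupp.sum_sum_index h0 h1]
        refine Finsupp.sum_congr fun m _ => ?_
        rw [AddMonoidAlgebra.coeff_finsuppSum, Finsupp.sum_sum_index h0 h1]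
        refine Finsupp.sum_congr fun l _ => ?_
        rw [AddMonoidAlgebra.coeff_single]
        exact Finsupp.sum_single_index (mul_zero _)
    _ = ∑ m ∈ P.coeff.support, ∑ l ∈ Q.coeff.support, Amon a l * (Amon a m * P.coeff m) * Q.coeff l := by
        refine Finset.sum_congr rfl fun m _ => Finset.sum_congr rfl fun l _ => ?_
        show Amon a (m + l) * (P.coeff m * Q.coeff l) = Amon a l * (Amon a m * P.coeff m) * Q.coeff l
        rw [Amon_add a hcomm m l, Amon_comm a hcomm m l]
        simp only [mul_assoc]
    _ = ∑ l ∈ Q.coeff.support, ∑ m ∈ P.coeff.support, Amon a l * (Amon a m * P.coeff m) * Q.coeff l :=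
        Finset.sum_comm
    _ = ∑ l ∈ Q.coeff.support, Amon a l * seval P a * Q.coeff l := by
        refine Finset.sum_congr rfl fun l _ => ?_
        rw [seval_eq, Finset.mul_sum, Finset.sum_mul]


/-- Evaluation formula for the slice product at points with commuting components:
`(P*Q)(a) = 0` if `P(a) = 0`, and otherwise
`(P*Q)(a) = P(a) ⬝ Q(P(a)⁻¹ a₁ P(a), …, P(a)⁻¹ aₙ P(a))`. -/
theorem seval_mul (n : ℕ) (a : Fin n → Hq)
    (hcomm : ∀ l m : Fin n, a l * a m = a m * a l) (P Q : SlicePoly n) :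
    (seval P a = 0 → seval (P * Q) a = 0) ∧
    (seval P a ≠ 0 → seval (P * Q) a =
      seval P a * seval Q (fun i => (seval P a)⁻¹ * a i * seval P a)) := by
  constructor
  · intro h
    rw [seval_mul_key a hcomm P Q]
    simp [h]
  · intro h
    set p := seval P a with hp
    rw [seval_mul_key a hcomm P Q]
    have hconj : ∀ l : Fin n →₀ ℕ,
        Amon (fun i => p⁻¹ * a i * p) l = p⁻¹ * Amon a l * p := by
      intro l
      have h2 : (conjHom p h) ((List.ofFn fun i => a i ^ l i).prod)
          = (List.ofFn fun i => (conjHom p h) (a i ^ l i)).prod := by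
        rw [MonoidHom.map_list_prod, List.map_ofFn]
        rfl
      have h3 : ∀ i : Fin n, (conjHom p h) (a i ^ l i) = (p⁻¹ * a i * p) ^ l i := by
        intro i
        rw [map_pow]
        rfl
      simp only [h3] at h2
      exact h2.symm
    rw [seval_eq (fun i => p⁻¹ * a i * p) Q, Finset.mul_sum]
    refine Finset.sum_congr rfl fun l _ => ?_
    rw [hconj l]
    simp only [mul_assoc, mul_inv_cancel_left₀ h]
    rfl
end

section
/- Let I be a right ideal of the ring (ℍ[q₁,…,qₙ], +, *). Then S_{V_c(I)} = V_c(S(I)); that is, the symmetrization of the slice algebraic set V_c(I) equals the slice algebraic set of the symmetrized ideal S(I). -/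
/-! ### Auxiliary machinery for the proof -/

namespace SVcProof
open Quaternion

/-! #### Quaternion facts -/

theorem re_eq_zero {K : Hq} (h : K^2 = -1) : K.re = 0 := by
  rw [sq] at h
  have h1 := congrArg QuaternionAlgebra.re h
  have h2 := congrArg QuaternionAlgebra.imI h
  have h3 := congrArg QuaternionAlgebra.imJ h
  have h4 := congrArg QuaternionAlgebra.imK h
  simp [Quaternion.re_mul, Quaternion.imI_mul, Quaternion.imJ_mul, Quaternion.imK_mul]
    at h1 h2 h3 h4
  by_contra hre
  have hI : K.imI = 0 := by
    have : K.re * K.imI = 0 := by linarith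
    exact (mul_eq_zero.mp this).resolve_left hre
  have hJ : K.imJ = 0 := by
    have : K.re * K.imJ = 0 := by linarith
    exact (mul_eq_zero.mp this).resolve_left hre
  have hK : K.imK = 0 := by
    have : K.re * K.imK = 0 := by linarith
    exact (mul_eq_zero.mp this).resolve_left hre
  nlinarith

theorem star_unit {K : Hq} (h : K^2 = -1) : star K = -K := by
  have := re_eq_zero h
  ext <;> simp [this]

theorem unit_ne_zero {K : Hq} (h : K^2 = -1) : K ≠ 0 := by
  intro h0; rw [h0] at h; simp at h

theorem normSq_unit {K : Hq} (h : K^2 = -1) : Quaternion.normSq K = 1 := by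
  have h3 : ((Quaternion.normSq K : ℝ) : Hq) = ((1:ℝ) : Hq) := by
    rw [← Quaternion.self_mul_star, star_unit h, mul_neg, ← sq, h]
    simp
  have := congrArg QuaternionAlgebra.re h3
  simpa using this

theorem real_extract {K : Hq} (h : K^2 = -1) {r s : ℝ}
    (hrs : (r : Hq) + (s : Hq) * K = 0) : r = 0 ∧ s = 0 := by
  have hre := congrArg QuaternionAlgebra.re hrs
  have hK := re_eq_zero h
  simp [Quaternion.re_mul, hK] at hre
  subst hre
  simp at hrs
  rcases hrs with hs | hK0
  · exact ⟨rfl, by simpa using congrArg QuaternionAlgebra.re hs⟩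
  · exact absurd hK0 (unit_ne_zero h)

theorem re_mul_comm (x y : Hq) : (x * y).re = (y * x).re := by
  simp [Quaternion.re_mul]; ring

theorem normSq_expand (a b : Hq) :
    normSq (a + b) = normSq a + normSq b + 2 * (a * star b).re := by
  have h1 : (b * star a).re = (a * star b).re := by
    have e : b * star a = star (a * star b) := by rw [star_mul, star_star]
    rw [e, Quaternion.re_star]
  simp only [Quaternion.normSq_def, star_add, mul_add, add_mul, Quaternion.re_add]
  rw [h1]; ring

theorem inv_eq (a : Hq) : a⁻¹ = (normSq a)⁻¹ • star a := rfl

theorem key_glue (uP vP uQ vQ : Hq)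
    (hNP : normSq uP = normSq vP)
    (hTP : uP * star vP + vP * star uP = 0)
    (hNQ : normSq uQ = normSq vQ)
    (hPQ : normSq (uP + uQ * (star uQ * uP - star vQ * vP))
         = normSq (vP + vQ * (star uQ * uP - star vQ * vP)))
    (hvP : vP ≠ 0) :
    (-(uP * vP⁻¹))^2 = -1 ∧ uQ + (-(uP * vP⁻¹)) * vQ = 0 := by
  have hnvP : normSq vP ≠ 0 := by simpa using hvP
  have huP : uP ≠ 0 := by
    intro h; apply hvP
    have : normSq vP = 0 := by rw [← hNP, h]; simp
    simpa using this
  set c := star uQ * uP - star vQ * vP with hc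
  have hc0 : c = 0 := by
    have e1 : normSq (uQ * c) = normSq (vQ * c) := by
      rw [map_mul, map_mul, hNQ]
    have e2 : (uP * star (uQ * c)).re = (vP * star (vQ * c)).re := by
      rw [normSq_expand, normSq_expand, hNP, e1] at hPQ
      linarith
    have e3 : (c * star c).re = 0 := by
      have l1 : (uP * star (uQ * c)).re = ((star uQ * uP) * star c).re := by
        rw [star_mul, ← mul_assoc, re_mul_comm, ← mul_assoc]
      have l2 : (vP * star (vQ * c)).re = ((star vQ * vP) * star c).re := by
        rw [star_mul, ← mul_assoc, re_mul_comm, ← mul_assoc]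
      have : ((star uQ * uP - star vQ * vP) * star c).re = 0 := by
        rw [sub_mul, Quaternion.re_sub, ← l1, ← l2, e2, sub_self]
      rwa [← hc] at this
    have : normSq c = 0 := by rw [Quaternion.normSq_def, e3]
    simpa using this
  have hstar : star uP * uQ = star vP * vQ := by
    have heq := sub_eq_zero.mp hc0
    calc star uP * uQ = star (star uQ * uP) := by rw [star_mul, star_star]
    _ = star (star vQ * vP) := by rw [heq]
    _ = star vP * vQ := by rw [star_mul, star_star]
  have hsuP : star uP ≠ 0 := star_ne_zero.mpr huP
  set w := uP * star vP with hwdef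
  have hw : star w = -w := by
    rw [hwdef, star_mul, star_star]
    exact eq_neg_of_add_eq_zero_right hTP
  have hcoesmul : ∀ (r s : ℝ), r • ((s : ℝ) : Hq) = ((r * s : ℝ) : Hq) := by
    intro r s
    rw [← Quaternion.coe_mul_eq_smul, ← Quaternion.coe_mul]
  have hww : w * w = -(((normSq vP * normSq vP : ℝ)) : Hq) := by
    have hws : w * star w = ((normSq w : ℝ) : Hq) := Quaternion.self_mul_star w
    rw [hw, mul_neg] at hws
    have h2 : w * w = -((normSq w : ℝ) : Hq) := by
      rw [← neg_neg (w*w), hws]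
    rw [h2, hwdef, map_mul, Quaternion.normSq_star, hNP]
  have hinvP : uP * vP⁻¹ = (normSq vP)⁻¹ • w := by
    rw [inv_eq, mul_smul_comm, hwdef]
  constructor
  · rw [sq, neg_mul_neg, hinvP, smul_mul_smul_comm, hww, smul_neg, hcoesmul]
    rw [show ((normSq vP)⁻¹ * (normSq vP)⁻¹) * (normSq vP * normSq vP) = 1 by
      field_simp]
    simp
  · have huQ : uQ = (normSq uP)⁻¹ • (uP * (star vP * vQ)) := by
      have e1 : uQ = (star uP)⁻¹ * (star vP * vQ) := by
        rw [← hstar, inv_mul_cancel_left₀ hsuP]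
      rw [e1, inv_eq, Quaternion.normSq_star, star_star, smul_mul_assoc]
    rw [huQ, neg_mul, hinvP, smul_mul_assoc, hNP, mul_assoc]
    simp

theorem anticomm {x y : Hq} (hx : x.re = 0) (hy : y.re = 0)
    (hdot : x.imI * y.imI + x.imJ * y.imJ + x.imK * y.imK = 0) :
    x * y = -(y * x) := by
  ext <;>
    simp [Quaternion.re_mul, Quaternion.imI_mul, Quaternion.imJ_mul, Quaternion.imK_mul,
      hx, hy] <;>
    linarith [hdot]

theorem conj_trans {K K' : Hq} (hK : K^2 = -1) (hK' : K'^2 = -1) :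
    ∃ g : Hq, g ≠ 0 ∧ g⁻¹ * K * g = K' := by
  by_cases h : K + K' = 0
  · have hKre := re_eq_zero hK
    have hKneg : K' = -K := by
      have := eq_neg_of_add_eq_zero_right h
      rw [this]
    obtain ⟨g, hg0, hgre, hgdot⟩ :
        ∃ g : Hq, g ≠ 0 ∧ g.re = 0 ∧
          K.imI * g.imI + K.imJ * g.imJ + K.imK * g.imK = 0 := by
      by_cases hJ : K.imJ = 0 ∧ K.imK = 0
      · refine ⟨⟨0,0,1,0⟩, ?_, rfl, by simp [hJ.1]⟩
        intro h0
        have := congrArg QuaternionAlgebra.imJ h0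
        simp at this
      · refine ⟨⟨0,0,-K.imK,K.imJ⟩, ?_, rfl, by simp; ring⟩
        intro h0
        have h1 := congrArg QuaternionAlgebra.imJ h0
        have h2 := congrArg QuaternionAlgebra.imK h0
        simp at h1 h2
        exact hJ ⟨h2, h1⟩
    have hac : K * g = -(g * K) := anticomm hKre hgre hgdot
    refine ⟨g, hg0, ?_⟩
    rw [mul_assoc, hac, mul_neg, ← mul_assoc, inv_mul_cancel₀ hg0, one_mul, hKneg]
  · refine ⟨K + K', h, ?_⟩
    have hcomm : K * (K + K') = (K + K') * K' := by
      have h1 : K * K = -1 := by rw [← sq, hK]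
      have h2 : K' * K' = -1 := by rw [← sq, hK']
      rw [mul_add, add_mul, h1, h2, add_comm]
    rw [mul_assoc, hcomm, ← mul_assoc, inv_mul_cancel₀ h, one_mul]

/-! #### The slice embeddings ℂ → ℍ -/

noncomputable def qlift (K : Hq) (hK : K^2 = -1) : ℂ →+* Hq where
  toFun ζ := (ζ.re : Hq) + (ζ.im : Hq) * K
  map_one' := by simp
  map_zero' := by simp
  map_add' ζ η := by
    simp only [Complex.add_re, Complex.add_im]
    push_cast
    noncomm_ring
  map_mul' ζ η := by
    have hre : K.re = 0 := re_eq_zero hK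
    have hsq : K.imI^2 + K.imJ^2 + K.imK^2 = 1 := by
      have hn := normSq_unit hK
      rw [Quaternion.normSq_def', hre] at hn
      linarith [hn]
    ext <;>
      simp [Quaternion.re_mul, Quaternion.imI_mul, Quaternion.imJ_mul, Quaternion.imK_mul,
        Complex.mul_re, Complex.mul_im, hre] <;>
      first
        | linear_combination (ζ.im * η.im) * hsq
        | linear_combination (2*ζ.im * η.im) * hsq
        | linear_combination K.imI*hsq
        | ring

theorem qlift_apply (K : Hq) (hK : K^2 = -1) (ζ : ℂ) :
    qlift K hK ζ = (ζ.re : Hq) + (ζ.im : Hq) * K := rfl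

theorem conj_unit {K g : Hq} (hK : K^2 = -1) (hg : g ≠ 0) : (g⁻¹ * K * g)^2 = -1 := by
  have hKK : K * K = -1 := by rw [← sq, hK]
  rw [sq]
  calc (g⁻¹ * K * g) * (g⁻¹ * K * g) = g⁻¹ * (K * (g * g⁻¹) * K) * g := by
        simp [mul_assoc]
  _ = -1 := by
        rw [mul_inv_cancel₀ hg, mul_one, hKK, mul_neg_one, neg_mul, inv_mul_cancel₀ hg]

theorem conj_qlift {K g : Hq} (hK : K^2 = -1) (hg : g ≠ 0) (ζ : ℂ) :
    g⁻¹ * qlift K hK ζ * g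
      = qlift (g⁻¹ * K * g) (conj_unit hK hg) ζ := by
  rw [qlift_apply, qlift_apply, mul_add, add_mul]
  congr 1
  · rw [← Quaternion.coe_commutes, mul_assoc, inv_mul_cancel₀ hg, mul_one]
  · rw [← mul_assoc, ← Quaternion.coe_commutes]
    simp [mul_assoc]

/-! #### Evaluation lemmas -/

variable {n : ℕ}

noncomputable def mon (a : Fin n → Hq) (m : Fin n →₀ ℕ) : Hq :=
  (List.ofFn fun i => a i ^ m i).prod

theorem seval_eq_sum_subset (P : SlicePoly n) (a : Fin n → Hq) {S : Finset (Fin n →₀ ℕ)}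
    (hS : P.coeff.support ⊆ S) : seval P a = ∑ m ∈ S, mon a m * P.coeff m := by
  rw [seval]
  exact Finset.sum_subset hS fun m _ hm => by
    simp [Finsupp.notMem_support_iff.mp hm]

theorem seval_add (P Q : SlicePoly n) (a : Fin n → Hq) :
    seval (P + Q) a = seval P a + seval Q a := by
  rw [seval_eq_sum_subset (P+Q) a (S := P.coeff.support ∪ Q.coeff.support)
        (Finsupp.support_add),
      seval_eq_sum_subset P a (S := P.coeff.support ∪ Q.coeff.support) (Finset.subset_union_left),
      seval_eq_sum_subset Q a (S := P.coeff.support ∪ Q.coeff.support) (Finset.subset_union_right),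
      ← Finset.sum_add_distrib]
  exact Finset.sum_congr rfl fun m _ => by
    rw [AddMonoidAlgebra.coeff_add, Finsupp.add_apply, mul_add]

theorem seval_zero (a : Fin n → Hq) : seval (0 : SlicePoly n) a = 0 := by
  simp [seval]

theorem rconj_apply (P : SlicePoly n) (m : Fin n →₀ ℕ) : (rconj P).coeff m = star (P.coeff m) := by
  classical
  rw [rconj]
  rw [AddMonoidAlgebra.coeff_sum, Finset.sum_apply']
  by_cases hm : m ∈ P.coeff.support
  · rw [Finset.sum_eq_single m]
    · simp
    · intro b _ hbm; simp [Finsupp.single_apply, hbm]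
    · intro h; exact absurd hm h
  · rw [Finsupp.notMem_support_iff.mp hm, star_zero]
    apply Finset.sum_eq_zero
    intro b hb
    have hbm : b ≠ m := fun e => hm (e ▸ hb)
    simp [Finsupp.single_apply, hbm]

theorem rconj_support_eq (P : SlicePoly n) : (rconj P).coeff.support = P.coeff.support := by
  ext m
  rw [Finsupp.mem_support_iff, Finsupp.mem_support_iff, rconj_apply, star_ne_zero]

noncomputable def zp (z : Fin n → ℂ) (m : Fin n →₀ ℕ) : ℂ := ∏ i, z i ^ m i

theorem zp_add (z : Fin n → ℂ) (l l' : Fin n →₀ ℕ) : zp z (l + l') = zp z l * zp z l' := by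
  rw [zp, zp, zp, ← Finset.prod_mul_distrib]
  exact Finset.prod_congr rfl fun i _ => by rw [Finsupp.add_apply, pow_add]

theorem mon_lift (K : Hq) (hK : K^2 = -1) (z : Fin n → ℂ) (m : Fin n →₀ ℕ) :
    mon (fun i => qlift K hK (z i)) m = qlift K hK (zp z m) := by
  rw [mon]
  have h1 : (List.ofFn fun i => qlift K hK (z i) ^ m i)
      = (List.ofFn fun i => z i ^ m i).map (qlift K hK) := by
    rw [List.map_ofFn]
    exact congrArg List.ofFn (funext fun i => by simp [map_pow])
  rw [h1, ← map_list_prod (qlift K hK)]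
  rw [zp, ← List.prod_ofFn (f := fun i => z i ^ m i)]

theorem seval_lift (K : Hq) (hK : K^2 = -1) (z : Fin n → ℂ) (P : SlicePoly n) :
    seval P (fun i => qlift K hK (z i)) = ∑ m ∈ P.coeff.support, qlift K hK (zp z m) * P.coeff m := by
  rw [seval]
  exact Finset.sum_congr rfl fun m _ => by rw [← mon_lift]; rfl

open Pointwise in
theorem seval_mul_lift (K : Hq) (hK : K^2 = -1) (z : Fin n → ℂ) (P Q : SlicePoly n) :
    seval (P * Q) (fun i => qlift K hK (z i))
      = ∑ l ∈ P.coeff.support, ∑ l' ∈ Q.coeff.support,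
          qlift K hK (zp z l * zp z l') * (P.coeff l * Q.coeff l') := by
  classical
  rw [seval_eq_sum_subset (P * Q) _ (AddMonoidAlgebra.support_coeff_mul_subset P Q)]
  have hterm : ∀ m, mon (fun i => qlift K hK (z i)) m * (P * Q).coeff m
      = ∑ l ∈ P.coeff.support, ∑ l' ∈ Q.coeff.support,
          if l + l' = m then qlift K hK (zp z m) * (P.coeff l * Q.coeff l') else 0 := by
    intro m
    rw [AddMonoidAlgebra.mul_apply, Finsupp.sum, mon_lift, Finset.mul_sum]
    refine Finset.sum_congr rfl fun l _ => ?_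
    rw [Finsupp.sum, Finset.mul_sum]
    refine Finset.sum_congr rfl fun l' _ => ?_
    rw [mul_ite, mul_zero]
  rw [Finset.sum_congr rfl fun m _ => hterm m]
  rw [Finset.sum_comm]
  refine Finset.sum_congr rfl fun l hl => ?_
  rw [Finset.sum_comm]
  refine Finset.sum_congr rfl fun l' hl' => ?_
  rw [Finset.sum_ite_eq (P.coeff.support + Q.coeff.support) (l + l')]
  rw [if_pos (Finset.add_mem_add hl hl'), zp_add]

/-! #### Slice components u, v -/

noncomputable def uu (z : Fin n → ℂ) (P : SlicePoly n) : Hq :=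
  ∑ m ∈ P.coeff.support, (zp z m).re • P.coeff m
noncomputable def vv (z : Fin n → ℂ) (P : SlicePoly n) : Hq :=
  ∑ m ∈ P.coeff.support, (zp z m).im • P.coeff m

theorem star_rsmul (r : ℝ) (x : Hq) : star (r • x) = r • star x := by
  rw [← Quaternion.coe_mul_eq_smul, ← Quaternion.coe_mul_eq_smul, star_mul,
    Quaternion.star_coe, Quaternion.coe_commutes]

theorem star_uu (z : Fin n → ℂ) (P : SlicePoly n) :
    star (uu z P) = ∑ m ∈ P.coeff.support, (zp z m).re • star (P.coeff m) := by
  rw [uu, star_sum]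
  exact Finset.sum_congr rfl fun m _ => star_rsmul _ _

theorem star_vv (z : Fin n → ℂ) (P : SlicePoly n) :
    star (vv z P) = ∑ m ∈ P.coeff.support, (zp z m).im • star (P.coeff m) := by
  rw [vv, star_sum]
  exact Finset.sum_congr rfl fun m _ => star_rsmul _ _

theorem seval_uv (K : Hq) (hK : K^2 = -1) (z : Fin n → ℂ) (P : SlicePoly n) :
    seval P (fun i => qlift K hK (z i)) = uu z P + K * vv z P := by
  rw [seval_lift, uu, vv, Finset.mul_sum, ← Finset.sum_add_distrib]
  refine Finset.sum_congr rfl fun m _ => ?_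
  rw [qlift_apply, add_mul, Quaternion.coe_mul_eq_smul, mul_assoc,
    Quaternion.coe_mul_eq_smul, mul_smul_comm]

theorem uu_eq_sum_subset (z : Fin n → ℂ) (P : SlicePoly n) {S : Finset (Fin n →₀ ℕ)}
    (hS : P.coeff.support ⊆ S) : uu z P = ∑ m ∈ S, (zp z m).re • P.coeff m := by
  rw [uu]
  exact Finset.sum_subset hS fun m _ hm => by
    simp [Finsupp.notMem_support_iff.mp hm]

theorem vv_eq_sum_subset (z : Fin n → ℂ) (P : SlicePoly n) {S : Finset (Fin n →₀ ℕ)}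
    (hS : P.coeff.support ⊆ S) : vv z P = ∑ m ∈ S, (zp z m).im • P.coeff m := by
  rw [vv]
  exact Finset.sum_subset hS fun m _ hm => by
    simp [Finsupp.notMem_support_iff.mp hm]

theorem uu_add (z : Fin n → ℂ) (P Q : SlicePoly n) :
    uu z (P + Q) = uu z P + uu z Q := by
  rw [uu_eq_sum_subset z (P+Q) (S := P.coeff.support ∪ Q.coeff.support) (Finsupp.support_add),
      uu_eq_sum_subset z P (S := P.coeff.support ∪ Q.coeff.support) (Finset.subset_union_left),
      uu_eq_sum_subset z Q (S := P.coeff.support ∪ Q.coeff.support) (Finset.subset_union_right),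
      ← Finset.sum_add_distrib]
  exact Finset.sum_congr rfl fun m _ => by rw [AddMonoidAlgebra.coeff_add, Finsupp.add_apply, smul_add]

theorem vv_add (z : Fin n → ℂ) (P Q : SlicePoly n) :
    vv z (P + Q) = vv z P + vv z Q := by
  rw [vv_eq_sum_subset z (P+Q) (S := P.coeff.support ∪ Q.coeff.support) (Finsupp.support_add),
      vv_eq_sum_subset z P (S := P.coeff.support ∪ Q.coeff.support) (Finset.subset_union_left),
      vv_eq_sum_subset z Q (S := P.coeff.support ∪ Q.coeff.support) (Finset.subset_union_right),
      ← Finset.sum_add_distrib]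
  exact Finset.sum_congr rfl fun m _ => by rw [AddMonoidAlgebra.coeff_add, Finsupp.add_apply, smul_add]

theorem const_support (c : Hq) :
    (AddMonoidAlgebra.single (0 : Fin n →₀ ℕ) c : SlicePoly n).coeff.support ⊆ {0} :=
  Finsupp.support_single_subset

theorem mul_const_apply (P : SlicePoly n) (c : Hq) (m : Fin n →₀ ℕ) :
    (P * AddMonoidAlgebra.single (0 : Fin n →₀ ℕ) c).coeff m = P.coeff m * c :=
  AddMonoidAlgebra.coeff_mul_single_zero P c m

theorem mul_const_support (P : SlicePoly n) (c : Hq) :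
    (P * AddMonoidAlgebra.single (0 : Fin n →₀ ℕ) c).coeff.support ⊆ P.coeff.support := by
  intro m hm
  rw [Finsupp.mem_support_iff] at hm ⊢
  rw [mul_const_apply] at hm
  intro h0
  rw [h0, zero_mul] at hm
  exact hm rfl

theorem uu_mul_const (z : Fin n → ℂ) (P : SlicePoly n) (c : Hq) :
    uu z (P * AddMonoidAlgebra.single (0 : Fin n →₀ ℕ) c) = uu z P * c := by
  rw [uu_eq_sum_subset z _ (mul_const_support P c), uu, Finset.sum_mul]
  exact Finset.sum_congr rfl fun m _ => by rw [mul_const_apply, smul_mul_assoc]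

theorem vv_mul_const (z : Fin n → ℂ) (P : SlicePoly n) (c : Hq) :
    vv z (P * AddMonoidAlgebra.single (0 : Fin n →₀ ℕ) c) = vv z P * c := by
  rw [vv_eq_sum_subset z _ (mul_const_support P c), vv, Finset.sum_mul]
  exact Finset.sum_congr rfl fun m _ => by rw [mul_const_apply, smul_mul_assoc]

/-! #### The master formula for the symmetrization -/

theorem ssymm_lift' (K : Hq) (hK : K^2 = -1) (z : Fin n → ℂ) (P : SlicePoly n) :
    seval (ssymm P) (fun i => qlift K hK (z i))
      = (uu z P * star (uu z P) - vv z P * star (vv z P))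
        + K * (uu z P * star (vv z P) + vv z P * star (uu z P)) := by
  rw [ssymm, seval_mul_lift]
  simp only [rconj_support_eq, rconj_apply]
  rw [star_uu, star_vv, uu, vv, Finset.sum_mul_sum, Finset.sum_mul_sum,
    Finset.sum_mul_sum, Finset.sum_mul_sum, ← Finset.sum_sub_distrib,
    ← Finset.sum_add_distrib, Finset.mul_sum, ← Finset.sum_add_distrib]
  refine Finset.sum_congr rfl fun l _ => ?_
  rw [← Finset.sum_sub_distrib, ← Finset.sum_add_distrib, Finset.mul_sum,
    ← Finset.sum_add_distrib]
  refine Finset.sum_congr rfl fun l' _ => ?_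
  rw [qlift_apply]
  simp only [Complex.mul_re, Complex.mul_im, smul_mul_smul_comm]
  rw [add_mul, Quaternion.coe_mul_eq_smul, mul_assoc, Quaternion.coe_mul_eq_smul]
  simp only [mul_add, mul_smul_comm]
  module

theorem ssymm_lift (K : Hq) (hK : K^2 = -1) (z : Fin n → ℂ) (P : SlicePoly n) :
    seval (ssymm P) (fun i => qlift K hK (z i))
      = ((normSq (uu z P) - normSq (vv z P) : ℝ) : Hq)
        + ((2 * (uu z P * star (vv z P)).re : ℝ) : Hq) * K := by
  rw [ssymm_lift']
  have h1 : uu z P * star (uu z P) = ((normSq (uu z P) : ℝ) : Hq) :=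
    Quaternion.self_mul_star _
  have h2 : vv z P * star (vv z P) = ((normSq (vv z P) : ℝ) : Hq) :=
    Quaternion.self_mul_star _
  have h3 : uu z P * star (vv z P) + vv z P * star (uu z P)
      = ((2 * (uu z P * star (vv z P)).re : ℝ) : Hq) := by
    have e : vv z P * star (uu z P) = star (uu z P * star (vv z P)) := by
      rw [star_mul, star_star]
    rw [e]
    exact Quaternion.self_add_star' _
  rw [h1, h2, h3, Quaternion.coe_commutes]
  push_cast
  ring

/-- The vanishing conditions extracted from `seval (ssymm P) = 0` at one slice point. -/
theorem cond_of_ssymm_zero {K : Hq} (hK : K^2 = -1) (z : Fin n → ℂ) (P : SlicePoly n)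
    (h : seval (ssymm P) (fun i => qlift K hK (z i)) = 0) :
    normSq (uu z P) = normSq (vv z P)
      ∧ uu z P * star (vv z P) + vv z P * star (uu z P) = 0 := by
  rw [ssymm_lift] at h
  obtain ⟨h1, h2⟩ := real_extract hK h
  constructor
  · linarith [h1]
  · have e : vv z P * star (uu z P) = star (uu z P * star (vv z P)) := by
      rw [star_mul, star_star]
    rw [e, Quaternion.self_add_star' _]
    have : (2 * (uu z P * star (vv z P)).re : ℝ) = 0 := h2
    rw [this]
    simp

/-- Conversely, the vanishing conditions kill `seval (ssymm P)` at every slice point. -/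
theorem ssymm_zero_of_cond {K' : Hq} (hK' : K'^2 = -1) (z : Fin n → ℂ) (P : SlicePoly n)
    (h1 : normSq (uu z P) = normSq (vv z P))
    (h2 : uu z P * star (vv z P) + vv z P * star (uu z P) = 0) :
    seval (ssymm P) (fun i => qlift K' hK' (z i)) = 0 := by
  rw [ssymm_lift, h1]
  have : (2 * (uu z P * star (vv z P)).re : ℝ) = 0 := by
    have e : ((2 * (uu z P * star (vv z P)).re : ℝ) : Hq) = 0 := by
      rw [← Quaternion.self_add_star' (uu z P * star (vv z P))]
      rw [star_mul, star_star]
      exact h2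
    simpa using congrArg QuaternionAlgebra.re e
  rw [this]
  simp

/-- If `P` vanishes at the K-slice point then the conditions hold. -/
theorem cond_of_eval_zero {K : Hq} (hK : K^2 = -1) (z : Fin n → ℂ) (P : SlicePoly n)
    (h : seval P (fun i => qlift K hK (z i)) = 0) :
    normSq (uu z P) = normSq (vv z P)
      ∧ uu z P * star (vv z P) + vv z P * star (uu z P) = 0 := by
  rw [seval_uv] at h
  have hu : uu z P = -(K * vv z P) := eq_neg_of_add_eq_zero_left h
  constructor
  · rw [hu, normSq_neg, map_mul, normSq_unit hK, one_mul]
  · rw [hu]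
    have hsK : star K = -K := star_unit hK
    have hKK : K * K = -1 := by rw [← sq, hK]
    have e1 : vv z P * star (-(K * vv z P)) = ((normSq (vv z P) : ℝ) : Hq) * K := by
      rw [star_neg, star_mul, hsK, mul_neg, mul_neg, mul_neg, neg_neg, ← mul_assoc,
        Quaternion.self_mul_star]
    have e2 : -(K * vv z P) * star (vv z P) = -(((normSq (vv z P) : ℝ) : Hq) * K) := by
      rw [neg_mul, mul_assoc, Quaternion.self_mul_star, Quaternion.coe_commutes]
    rw [e1, e2, neg_add_cancel]

/-- If `W` vanishes on every slice point over `z`, so does `W * R`. -/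
theorem seval_mul_zero {K : Hq} (hK : K^2 = -1) (z : Fin n → ℂ) (W R : SlicePoly n)
    (h : seval W (fun i => qlift K hK (z i)) = 0) :
    seval (W * R) (fun i => qlift K hK (z i)) = 0 := by
  rw [seval_mul_lift, Finset.sum_comm]
  apply Finset.sum_eq_zero
  intro l' _
  have hterm : ∀ l ∈ W.coeff.support, qlift K hK (zp z l * zp z l') * (W.coeff l * R.coeff l')
      = qlift K hK (zp z l') * (qlift K hK (zp z l) * W.coeff l) * R.coeff l' := by
    intro l _
    rw [mul_comm (zp z l), map_mul]
    simp [mul_assoc]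
  rw [Finset.sum_congr rfl hterm, ← Finset.sum_mul, ← Finset.mul_sum, ← seval_lift, h,
    mul_zero, zero_mul]

/-- The right ideal of polynomials vanishing identically on the slice circularization of z. -/
noncomputable def vanIdeal (z : Fin n → ℂ) : RightIdeal (SlicePoly n) where
  carrier := {W | ∀ K : Hq, ∀ hK : K^2 = -1, seval W (fun i => qlift K hK (z i)) = 0}
  zero_mem := fun K hK => seval_zero _
  add_mem := fun hx hy K hK => by rw [seval_add, hx K hK, hy K hK, add_zero]
  mul_mem_right := fun R hx K hK => seval_mul_zero hK z _ R (hx K hK)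

end SVcProof

namespace SVcProof

theorem slice_rep {n : ℕ} {a : Fin n → Hq} (h : a ∈ slicePoints n) :
    ∃ (K : Hq) (hK : K^2 = -1) (z : Fin n → ℂ), a = fun i => qlift K hK (z i) := by
  obtain ⟨K, hK, hx⟩ := h
  choose x y hxy using hx
  exact ⟨K, hK, fun i => ⟨x i, y i⟩, funext fun i => by simp only [qlift_apply]; exact hxy i⟩

theorem lift_mem_slice {n : ℕ} (K : Hq) (hK : K^2 = -1) (z : Fin n → ℂ) :
    (fun i => qlift K hK (z i)) ∈ slicePoints n :=
  ⟨K, hK, fun i => ⟨(z i).re, (z i).im, qlift_apply K hK (z i)⟩⟩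

theorem ssymm_mem_symmIdeal {n : ℕ} {I : RightIdeal (SlicePoly n)} {Q : SlicePoly n}
    (hQ : Q ∈ I.carrier) : ssymm Q ∈ (symmIdeal I).carrier :=
  fun J hJ => hJ ⟨Q, hQ, rfl⟩

end SVcProof

open SVcProof Quaternion in
/-- The symmetrization of the slice algebraic set `V_c(I)` equals the slice algebraic set
of the symmetrized ideal: `S_{V_c(I)} = V_c(S(I))`. -/
theorem symmSet_Vc_eq_Vc_symmIdeal (n : ℕ) (I : RightIdeal (SlicePoly n)) :
    symmSet (Vc I) = Vc (symmIdeal I) := by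
  ext b
  simp only [symmSet, Set.mem_iUnion]
  constructor
  · rintro ⟨a, ⟨haV, haS⟩, g, hg, rfl⟩
    obtain ⟨K, hK, z, hz⟩ := slice_rep haS
    subst hz
    have hb' : (fun i => g⁻¹ * (fun i => qlift K hK (z i)) i * g)
        = fun i => qlift (g⁻¹*K*g) (conj_unit hK hg) (z i) :=
      funext fun i => conj_qlift hK hg (z i)
    rw [hb']
    refine ⟨?_, lift_mem_slice _ _ z⟩
    intro W hW
    have hWvan : W ∈ (vanIdeal z).carrier := by
      refine hW (vanIdeal z) ?_
      rintro _ ⟨Q, hQ, rfl⟩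
      intro K' hK'
      have h0 : seval Q (fun i => qlift K hK (z i)) = 0 := haV Q hQ
      obtain ⟨c1, c2⟩ := cond_of_eval_zero hK z Q h0
      exact ssymm_zero_of_cond hK' z Q c1 c2
    exact hWvan _ (conj_unit hK hg)
  · rintro ⟨hbV, hbS⟩
    obtain ⟨K, hK, z, hz⟩ := slice_rep hbS
    subst hz
    have hcond : ∀ Q ∈ I.carrier, normSq (uu z Q) = normSq (vv z Q)
        ∧ uu z Q * star (vv z Q) + vv z Q * star (uu z Q) = 0 := fun Q hQ =>
      cond_of_ssymm_zero hK z Q (hbV _ (ssymm_mem_symmIdeal hQ))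
    by_cases hv : ∀ P ∈ I.carrier, vv z P = 0
    · refine ⟨_, ⟨?_, lift_mem_slice K hK z⟩, 1, one_ne_zero, ?_⟩
      · intro Q hQ
        rw [seval_uv]
        have h1 := (hcond Q hQ).1
        rw [hv Q hQ] at h1 ⊢
        have h2 : uu z Q = 0 := by
          have h3 : normSq (uu z Q) = 0 := by rw [h1]; simp
          simpa using h3
        rw [h2]
        simp
      · funext i
        simp
    · push_neg at hv
      obtain ⟨P, hP, hvP⟩ := hv
      have hmain : ∀ Q ∈ I.carrier, (-(uu z P * (vv z P)⁻¹))^2 = -1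
          ∧ uu z Q + (-(uu z P * (vv z P)⁻¹)) * vv z Q = 0 := by
        intro Q hQ
        have hmem : P + Q * AddMonoidAlgebra.single 0
            (star (uu z Q) * uu z P - star (vv z Q) * vv z P) ∈ I.carrier :=
          I.add_mem hP (I.mul_mem_right _ hQ)
        have hPQ := (hcond _ hmem).1
        rw [uu_add, vv_add, uu_mul_const, vv_mul_const] at hPQ
        exact key_glue (uu z P) (vv z P) (uu z Q) (vv z Q)
          (hcond P hP).1 (hcond P hP).2 (hcond Q hQ).1 hPQ hvP
      have hK' : (-(uu z P * (vv z P)⁻¹))^2 = -1 := (hmain P hP).1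
      obtain ⟨g, hg, hgK⟩ := conj_trans hK' hK
      refine ⟨(fun i => qlift _ hK' (z i)), ⟨?_, lift_mem_slice _ hK' z⟩, g, hg, ?_⟩
      · intro Q hQ
        rw [seval_uv]
        exact (hmain Q hQ).2
      · funext i
        rw [conj_qlift hK' hg (z i), qlift_apply, qlift_apply, hgK]
end

section
/- Every completely prime right ideal of the ring (ℍ[q₁,…,qₙ], +, *) is quasi prime. -/
lemma rconj_apply {n : ℕ} (P : SlicePoly n) (l : Fin n →₀ ℕ) :
    (rconj P).coeff l = star (P.coeff l) := by
  classical
  rw [rconj, AddMonoidAlgebra.coeff_sum, Finsupp.finset_sum_apply]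
  simp only [AddMonoidAlgebra.coeff_single, Finsupp.single_apply]
  rw [Finset.sum_ite_eq' P.coeff.support l (fun m => star (P.coeff m))]
  by_cases h : l ∈ P.coeff.support
  · simp [h]
  · simp [h, Finsupp.notMem_support_iff.mp h]

lemma rconj_support {n : ℕ} (P : SlicePoly n) : (rconj P).coeff.support = P.coeff.support := by
  ext l
  simp [Finsupp.mem_support_iff, rconj_apply]

lemma star_ssymm_apply {n : ℕ} (Q : SlicePoly n) (m : Fin n →₀ ℕ) :
    star ((ssymm Q).coeff m) = (ssymm Q).coeff m := by
  classical
  rw [ssymm, AddMonoidAlgebra.mul_apply]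
  simp only [Finsupp.sum, star_sum, rconj_support]
  rw [Finset.sum_comm]
  apply Finset.sum_congr rfl
  intro a₂ _
  apply Finset.sum_congr rfl
  intro a₁ _
  rw [apply_ite star, star_mul, star_zero, rconj_apply, star_star, rconj_apply]
  congr 1
  simp [add_comm]

lemma central_commute {n : ℕ} (x : SlicePoly n) (hx : ∀ m, star (x.coeff m) = x.coeff m)
    (y : SlicePoly n) : x * y = y * x := by
  classical
  refine AddMonoidAlgebra.ext (Finsupp.ext fun m => ?_)
  rw [AddMonoidAlgebra.mul_apply, AddMonoidAlgebra.mul_apply]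
  simp only [Finsupp.sum]
  rw [Finset.sum_comm]
  apply Finset.sum_congr rfl
  intro a₂ _
  apply Finset.sum_congr rfl
  intro a₁ _
  have hc : x.coeff a₁ = ((x.coeff a₁).re : Hq) := Quaternion.star_eq_self.mp (hx a₁)
  congr 1
  · simp [add_comm]
  · rw [hc, Quaternion.coe_commutes]

/-- Every completely prime right ideal of ℍ[q₁,…,qₙ] is quasi prime. -/
theorem quasiPrime_of_completelyPrime (n : ℕ) (I : RightIdeal (SlicePoly n))
    (hcp : CompletelyPrime I) : QuasiPrime I := by
  intro P Q hPQ
  have h1 : P * ssymm Q ∈ I.carrier := by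
    have := I.mul_mem_right (rconj Q) hPQ
    rwa [mul_assoc] at this
  have hcomm : ∀ y, ssymm Q * y = y * ssymm Q :=
    central_commute _ (star_ssymm_apply Q)
  have h2 : ssymm Q * P ∈ I.carrier := by rw [hcomm]; exact h1
  have h3 : ∀ R ∈ I.carrier, ssymm Q * R ∈ I.carrier := fun R hR => by
    rw [hcomm]; exact I.mul_mem_right _ hR
  rcases hcp (ssymm Q) P h2 h3 with h | h
  · right; exact h
  · left; exact h
end

section
/- For every slice regular polynomial P ∈ ℍ[q₁,…,qₙ], one has P * P^c = P^c * P, and every coefficient of the symmetrization P^s = P * P^c is a real number. -/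
lemma key (a b : Hq) : a * star b + b * star a = star a * b + star b * a := by
  ext <;> simp [Quaternion.re_mul, Quaternion.imI_mul, Quaternion.imJ_mul, Quaternion.imK_mul] <;> ring

lemma half (x y : Hq) (h : x + x = y + y) : x = y := by
  have h2 : (2:ℝ) • x = (2:ℝ) • y := by rw [two_smul, two_smul]; exact h
  have := congrArg (fun z => (2:ℝ)⁻¹ • z) h2
  simpa [smul_smul] using this

/-- For every slice regular polynomial `P`, one has `P * P^c = P^c * P`, and every
coefficient of the symmetrization `P^s = P * P^c` is real. -/
theorem symm_comm_and_real_coeffs (n : ℕ) (P : SlicePoly n) :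
    P * rconj P = rconj P * P ∧
    ∀ m : Fin n →₀ ℕ, ∃ r : ℝ, (P * rconj P).coeff m = (r : Hq) := by
  classical
  have hmul1 : ∀ m, (P * rconj P).coeff m
      = ∑ k ∈ P.coeff.support, ∑ l ∈ P.coeff.support, if k + l = m then P.coeff k * star (P.coeff l) else 0 := by
    intro m
    rw [AddMonoidAlgebra.mul_apply]
    simp only [Finsupp.sum, rconj_support, rconj_apply]
  have hmul2 : ∀ m, (rconj P * P).coeff m
      = ∑ k ∈ P.coeff.support, ∑ l ∈ P.coeff.support, if k + l = m then star (P.coeff k) * P.coeff l else 0 := by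
    intro m
    rw [AddMonoidAlgebra.mul_apply]
    simp only [Finsupp.sum, rconj_support, rconj_apply]
  constructor
  · refine AddMonoidAlgebra.ext (Finsupp.ext fun m => ?_)
    rw [hmul1, hmul2]
    apply half
    have c1 : (∑ k ∈ P.coeff.support, ∑ l ∈ P.coeff.support, if k + l = m then P.coeff k * star (P.coeff l) else 0)
        = ∑ k ∈ P.coeff.support, ∑ l ∈ P.coeff.support, if l + k = m then P.coeff l * star (P.coeff k) else 0 :=
      Finset.sum_comm
    have c2 : (∑ k ∈ P.coeff.support, ∑ l ∈ P.coeff.support, if k + l = m then star (P.coeff k) * P.coeff l else 0)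
        = ∑ k ∈ P.coeff.support, ∑ l ∈ P.coeff.support, if l + k = m then star (P.coeff l) * P.coeff k else 0 :=
      Finset.sum_comm
    nth_rewrite 2 [c1]
    nth_rewrite 2 [c2]
    rw [← Finset.sum_add_distrib, ← Finset.sum_add_distrib]
    apply Finset.sum_congr rfl
    intro k _
    rw [← Finset.sum_add_distrib, ← Finset.sum_add_distrib]
    apply Finset.sum_congr rfl
    intro l _
    by_cases h : k + l = m
    · have h' : l + k = m := by rwa [add_comm]
      simp only [h, h', if_true]
      exact key (P.coeff k) (P.coeff l)
    · have h' : l + k ≠ m := by rwa [add_comm]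
      simp [h, h']
  · intro m
    have hstar : star ((P * rconj P).coeff m) = (P * rconj P).coeff m := by
      rw [hmul1]
      rw [star_sum]
      simp only [star_sum, apply_ite star, star_mul, star_star, star_zero]
      rw [Finset.sum_comm]
      apply Finset.sum_congr rfl
      intro k _
      apply Finset.sum_congr rfl
      intro l _
      rw [add_comm l k]
    exact ⟨((P * rconj P).coeff m).re, Quaternion.star_eq_self.mp hstar⟩
end

section
/- The right ideal I = ⟨q₁²+1, q₂²+1⟩ generated by q₁²+1 and q₂²+1 in the ring (ℍ[q₁,q₂], +, *) is not quasi prime: one has (q₁−q₂)*(q₁+q₂) = q₁²−q₂² ∈ I, but q₁−q₂ ∉ I and (q₁+q₂)^s ∉ I. -/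
/-- The variable `q₁` in ℍ[q₁,q₂]. -/
noncomputable def q1 : SlicePoly 2 := AddMonoidAlgebra.single (Finsupp.single 0 1) 1

/-- The variable `q₂` in ℍ[q₁,q₂]. -/
noncomputable def q2 : SlicePoly 2 := AddMonoidAlgebra.single (Finsupp.single 1 1) 1

/-! ### Auxiliary machinery for the counterexample -/

instance : CharZero Hq := by
  refine ⟨fun a b h => ?_⟩
  have : ((a : ℝ) : Hq) = ((b : ℝ) : Hq) := by push_cast; exact_mod_cast h
  exact_mod_cast Quaternion.coe_injective this


/-- The matrix `A = [[0,-1],[1,0]]` with `A² = -1`, commuting with all scalar matrices. -/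
noncomputable def Amat : Matrix (Fin 2) (Fin 2) Hq := !![0,-1;1,0]

lemma Amat_sq : Amat * Amat = -1 := by
  unfold Amat
  refine Matrix.ext fun i j => ?_
  fin_cases i <;> fin_cases j <;> simp [Matrix.mul_apply, Fin.sum_univ_two]

lemma scalar_comm_Amat (a : Hq) : Commute ((Matrix.scalar (Fin 2)) a) Amat := by
  refine Matrix.ext fun i j => ?_
  fin_cases i <;> fin_cases j <;>
    simp [Amat, Matrix.mul_apply, Fin.sum_univ_two, Matrix.scalar, Matrix.one_apply]

/-- The monoid homomorphism sending the monomial `q₁^{m₀} q₂^{m₁}` to `A^{m₀} B^{m₁}`. -/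
noncomputable def gHom (B : Matrix (Fin 2) (Fin 2) Hq) (hAB : Commute Amat B) :
    Multiplicative (Fin 2 →₀ ℕ) →* Matrix (Fin 2) (Fin 2) Hq where
  toFun m := Amat ^ (Multiplicative.toAdd m 0) * B ^ (Multiplicative.toAdd m 1)
  map_one' := by simp
  map_mul' x y := by
    simp only [toAdd_mul, Finsupp.add_apply, pow_add]
    exact ((hAB.pow_pow _ _).mul_mul_mul_comm _ _)

/-- The evaluation ring homomorphism `ℍ[q₁,q₂] → M₂(ℍ)` with `q₁ ↦ A`, `q₂ ↦ B`. -/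
noncomputable def psiHom (B : Matrix (Fin 2) (Fin 2) Hq) (hAB : Commute Amat B)
    (hsB : ∀ a : Hq, Commute ((Matrix.scalar (Fin 2)) a) B) :
    SlicePoly 2 →+* Matrix (Fin 2) (Fin 2) Hq :=
  AddMonoidAlgebra.liftNCRingHom (Matrix.scalar (Fin 2)) (gHom B hAB)
    (fun x y => Commute.mul_right ((scalar_comm_Amat x).pow_right _) ((hsB x).pow_right _))

lemma psi_q1 (B hAB hsB) : psiHom B hAB hsB q1 = Amat := by
  simp [psiHom, q1, AddMonoidAlgebra.liftNCRingHom, AddMonoidAlgebra.liftNC_single, gHom,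
    Finsupp.single_apply]

lemma psi_q2 (B hAB hsB) : psiHom B hAB hsB q2 = B := by
  simp [psiHom, q2, AddMonoidAlgebra.liftNCRingHom, AddMonoidAlgebra.liftNC_single, gHom,
    Finsupp.single_apply]

/-- The kernel of a ring homomorphism, as a right ideal. -/
noncomputable def kerId {S : Type} [Ring S] (f : SlicePoly 2 →+* S) : RightIdeal (SlicePoly 2) where
  carrier := {P | f P = 0}
  zero_mem := map_zero f
  add_mem := fun hx hy => by
    simp only [Set.mem_setOf_eq, map_add] at *
    rw [hx, hy, add_zero]
  mul_mem_right := fun y hx => by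
    simp only [Set.mem_setOf_eq, map_mul] at *
    rw [hx, zero_mul]

noncomputable def psiP : SlicePoly 2 →+* Matrix (Fin 2) (Fin 2) Hq :=
  psiHom Amat (Commute.refl _) scalar_comm_Amat

noncomputable def psiN : SlicePoly 2 →+* Matrix (Fin 2) (Fin 2) Hq :=
  psiHom (-Amat) (Commute.refl Amat).neg_right (fun a => (scalar_comm_Amat a).neg_right)

lemma psiP_gen : {q1 ^ 2 + 1, q2 ^ 2 + 1} ⊆ (kerId psiP).carrier := by
  intro P hP
  simp only [Set.mem_insert_iff, Set.mem_singleton_iff] at hP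
  rcases hP with rfl | rfl <;>
  · show psiP _ = 0
    rw [map_add, map_pow, map_one, psiP]
    first
      | rw [psi_q1, sq, Amat_sq, neg_add_cancel]
      | rw [psi_q2, sq, Amat_sq, neg_add_cancel]

lemma psiN_gen : {q1 ^ 2 + 1, q2 ^ 2 + 1} ⊆ (kerId psiN).carrier := by
  intro P hP
  simp only [Set.mem_insert_iff, Set.mem_singleton_iff] at hP
  rcases hP with rfl | rfl <;>
  · show psiN _ = 0
    rw [map_add, map_pow, map_one, psiN]
    first
      | rw [psi_q1, sq, Amat_sq, neg_add_cancel]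
      | rw [psi_q2, sq, neg_mul_neg, Amat_sq, neg_add_cancel]

lemma q2_mul_q1 : q2 * q1 = q1 * q2 := by
  simp only [q1, q2, AddMonoidAlgebra.single_mul_single, one_mul]
  rw [add_comm]

lemma rconj_q1_add_q2 : rconj (q1 + q2) = q1 + q2 := by
  have h : ∀ m, star ((q1 + q2).coeff m) = (q1 + q2).coeff m := by
    intro m
    classical
    rw [AddMonoidAlgebra.coeff_add, Finsupp.add_apply]
    simp only [q1, q2, AddMonoidAlgebra.coeff_single, Finsupp.single_apply]
    split_ifs <;> simp
  unfold rconj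
  simp_rw [h]
  simp_rw [← AddMonoidAlgebra.ofCoeff_single, ← AddMonoidAlgebra.ofCoeff_sum]
  exact congrArg _ (Finsupp.sum_single _)

lemma twoA_ne : Amat - -Amat ≠ 0 := by
  intro h
  rw [sub_neg_eq_add] at h
  have h2 : (Amat + Amat) 1 0 = (0 : Matrix (Fin 2) (Fin 2) Hq) 1 0 := by rw [h]
  simp only [Matrix.add_apply, Matrix.zero_apply, Amat] at h2
  norm_num at h2

lemma fourA_ne : (Amat + Amat) * (Amat + Amat) ≠ 0 := by
  rw [add_mul, mul_add, Amat_sq]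
  intro h
  have h2 : ((-1 + -1 + (-1 + -1) : Matrix (Fin 2) (Fin 2) Hq)) 0 0
      = (0 : Matrix (Fin 2) (Fin 2) Hq) 0 0 := by rw [h]
  simp only [Matrix.add_apply, Matrix.neg_apply, Matrix.one_apply_eq, Matrix.zero_apply] at h2
  norm_num at h2

/-- The right ideal `I = ⟨q₁²+1, q₂²+1⟩` of ℍ[q₁,q₂] is not quasi prime:
`(q₁−q₂)*(q₁+q₂) = q₁²−q₂² ∈ I`, but `q₁−q₂ ∉ I` and `(q₁+q₂)^s ∉ I`. -/

theorem example_not_quasiPrime :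
    (q1 - q2) * (q1 + q2) = q1 ^ 2 - q2 ^ 2 ∧
    q1 ^ 2 - q2 ^ 2 ∈ (RightIdeal.span {q1 ^ 2 + 1, q2 ^ 2 + 1}).carrier ∧
    q1 - q2 ∉ (RightIdeal.span {q1 ^ 2 + 1, q2 ^ 2 + 1}).carrier ∧
    ssymm (q1 + q2) ∉ (RightIdeal.span {q1 ^ 2 + 1, q2 ^ 2 + 1}).carrier ∧
    ¬ QuasiPrime (RightIdeal.span {q1 ^ 2 + 1, q2 ^ 2 + 1}) := by
  
  have hprod : (q1 - q2) * (q1 + q2) = q1 ^ 2 - q2 ^ 2 := by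
    rw [sub_mul, mul_add, mul_add, q2_mul_q1, sq, sq]
    abel
  have hmem : q1 ^ 2 - q2 ^ 2 ∈ (RightIdeal.span {q1 ^ 2 + 1, q2 ^ 2 + 1}).carrier := by
    intro I hs
    have key : q1 ^ 2 - q2 ^ 2 = (q1 ^ 2 + 1) + (q2 ^ 2 + 1) * (-1) := by noncomm_ring
    rw [key]
    exact I.add_mem (hs (Set.mem_insert _ _))
      (I.mul_mem_right _ (hs (Set.mem_insert_of_mem _ rfl)))
  have hnot1 : q1 - q2 ∉ (RightIdeal.span {q1 ^ 2 + 1, q2 ^ 2 + 1}).carrier := by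
    intro h
    have h0 : psiN (q1 - q2) = 0 := h (kerId psiN) psiN_gen
    rw [map_sub, psiN, psi_q1, psi_q2] at h0
    exact twoA_ne h0
  have hnot2 : ssymm (q1 + q2) ∉ (RightIdeal.span {q1 ^ 2 + 1, q2 ^ 2 + 1}).carrier := by
    intro h
    have h0 : psiP (ssymm (q1 + q2)) = 0 := h (kerId psiP) psiP_gen
    rw [ssymm, rconj_q1_add_q2, map_mul, map_add, psiP, psi_q1, psi_q2] at h0
    exact fourA_ne h0
  refine ⟨hprod, hmem, hnot1, hnot2, fun hQP => ?_⟩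
  rcases hQP (q1 - q2) (q1 + q2) (by rw [hprod]; exact hmem) with h | h
  · exact hnot1 h
  · exact hnot2 h
end
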